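/- Let A_1, A_2 ∈ ℝ^{n×n}, B_1, B_2 ∈ ℝ^{n×p}. Let Ω ⊆ (ℂ ∖ σ(A_1)) × (ℂ ∖ σ(A_2)) be such that Ω ∩ (ℝ×ℝ) is dense in ℝ×ℝ, and let P ∈ ℝ[X,Y]^{n×r} be such that for every (λ,μ) ∈ Ω the ℂ-linear span of the columns of P(λ,μ) equals V_{A_1,B_1}(λ) ∩ V_{A_2,B_2}(μ). Write P(λ,μ) = Σ_{k=0}^{N} Σ_{l=0}^{N} C_{kl} λ^k μ^l with coefficient matrices C_{kl} ∈ ℝ^{n×r}. Then the pairs (A_1,B_1) and (A_2,B_2) are feedback rectifiable over Ω if and only if the only α ∈ ℝ^n satisfying αᵀC_{kl} = 0 for all k, l ∈ {0,…,N} is α = 0. -/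

import Mathlib

open Matrix

noncomputable section

/-- Entrywise coercion of a real matrix to a complex matrix. -/
def mapC {n m : ℕ} (A : Matrix (Fin n) (Fin m) ℝ) : Matrix (Fin n) (Fin m) ℂ :=
  A.map (fun x => (x : ℂ))

/-- `V_{A,B}(λ) = {v ∈ ℂ^n : (λI − A)v ∈ range B}`. -/
def Vsp {n p : ℕ} (A : Matrix (Fin n) (Fin n) ℝ) (B : Matrix (Fin n) (Fin p) ℝ) (l : ℂ) :
    Submodule ℂ (Fin n → ℂ) :=
  Submodule.comap (l • (1 : Matrix (Fin n) (Fin n) ℂ) - mapC A).mulVecLin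
    (LinearMap.range (mapC B).mulVecLin)

/-- The pairs `(A₁,B₁)` and `(A₂,B₂)` are feedback rectifiable over `D ⊆ ℂ × ℂ`. -/
def FeedbackRectifiable {n p : ℕ} (A₁ A₂ : Matrix (Fin n) (Fin n) ℝ)
    (B₁ B₂ : Matrix (Fin n) (Fin p) ℝ) (D : Set (ℂ × ℂ)) : Prop :=
  ∃ (F₁ F₂ : Matrix (Fin p) (Fin n) ℝ) (lm : Fin n → ℂ × ℂ) (v : Fin n → Fin n → ℂ),
    (∀ i, lm i ∈ D) ∧ LinearIndependent ℂ v ∧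
    (∀ i, (mapC (A₁ + B₁ * F₁)).mulVec (v i) = (lm i).1 • v i) ∧
    (∀ i, (mapC (A₂ + B₂ * F₂)).mulVec (v i) = (lm i).2 • v i)

-- auxiliary lemmas
def coeVec {n : ℕ} (v : Fin n → ℝ) : Fin n → ℂ := fun i => (v i : ℂ)

lemma coeVec_smul {n : ℕ} (x : ℝ) (v : Fin n → ℝ) :
    coeVec (x • v) = (x : ℂ) • coeVec v := by
  funext i; simp [coeVec]

lemma mapC_mulVec {n m : ℕ} (M : Matrix (Fin n) (Fin m) ℝ) (v : Fin m → ℝ) :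
    (mapC M).mulVec (coeVec v) = coeVec (M.mulVec v) := by
  funext i
  simp only [mapC, Matrix.mulVec, dotProduct, Matrix.map_apply, coeVec]
  push_cast
  rfl

lemma mapC_add {n m : ℕ} (A B : Matrix (Fin n) (Fin m) ℝ) :
    mapC (A + B) = mapC A + mapC B := by
  ext i j; simp [mapC]

lemma mapC_mul {n m q : ℕ} (A : Matrix (Fin n) (Fin m) ℝ) (B : Matrix (Fin m) (Fin q) ℝ) :
    mapC (A * B) = mapC A * mapC B := by
  ext i j
  simp only [mapC, Matrix.map_apply, Matrix.mul_apply]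
  push_cast
  rfl

lemma vecMul_sumF {ι R : Type*} [CommSemiring R] {m q : ℕ} (s : Finset ι)
    (v : Fin m → R) (M : ι → Matrix (Fin m) (Fin q) R) :
    Matrix.vecMul v (∑ i ∈ s, M i) = ∑ i ∈ s, Matrix.vecMul v (M i) := by
  funext j
  simp only [Matrix.vecMul, dotProduct, Matrix.sum_apply, Finset.sum_apply,
    Finset.mul_sum]
  exact Finset.sum_comm

lemma vecMul_smulF {R : Type*} [CommSemiring R] {m q : ℕ} (c : R)
    (v : Fin m → R) (M : Matrix (Fin m) (Fin q) R) :
    Matrix.vecMul v (c • M) = c • Matrix.vecMul v M := by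
  funext j
  simp [Matrix.vecMul, dotProduct, Finset.mul_sum, mul_left_comm]

lemma vecMul_coe_mapC {n q : ℕ} (α : Fin n → ℝ) (M : Matrix (Fin n) (Fin q) ℝ) :
    Matrix.vecMul (coeVec α) (mapC M) = coeVec (Matrix.vecMul α M) := by
  funext j
  simp only [Matrix.vecMul, dotProduct, mapC, Matrix.map_apply, coeVec]
  push_cast
  rfl

lemma coeff_eq_zero_of_eval_zero {N : ℕ} (a : ℕ → ℝ)
    (h : ∀ x : ℝ, ∑ k ∈ Finset.range (N + 1), a k * x ^ k = 0) :
    ∀ k, k ≤ N → a k = 0 := by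
  have hq : (∑ k ∈ Finset.range (N + 1),
      Polynomial.C (a k) * Polynomial.X ^ k : Polynomial ℝ) = 0 := by
    apply Polynomial.funext
    intro x
    simpa [Polynomial.eval_finset_sum] using h x
  intro k hk
  have h2 := congrArg (fun q : Polynomial ℝ => q.coeff k) hq
  simpa [Polynomial.finset_sum_coeff, Polynomial.coeff_C_mul, Polynomial.coeff_X_pow,
    Finset.mem_range, Nat.lt_succ_iff, hk] using h2

lemma coeff2_eq_zero_of_eval_zero {N : ℕ} (a : ℕ → ℕ → ℝ)
    (h : ∀ x y : ℝ, ∑ k ∈ Finset.range (N + 1), ∑ l ∈ Finset.range (N + 1),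
      (x ^ k * y ^ l) * a k l = 0) :
    ∀ k l, k ≤ N → l ≤ N → a k l = 0 := by
  intro k l hk hl
  have h1 : ∀ x : ℝ, ∀ l', l' ≤ N →
      ∑ k' ∈ Finset.range (N + 1), a k' l' * x ^ k' = 0 := by
    intro x
    apply coeff_eq_zero_of_eval_zero
      (fun l' => ∑ k' ∈ Finset.range (N + 1), a k' l' * x ^ k')
    intro y
    have e : ∑ l' ∈ Finset.range (N + 1),
          (∑ k' ∈ Finset.range (N + 1), a k' l' * x ^ k') * y ^ l'
        = ∑ k' ∈ Finset.range (N + 1), ∑ l' ∈ Finset.range (N + 1),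
          (x ^ k' * y ^ l') * a k' l' := by
      calc ∑ l' ∈ Finset.range (N + 1),
            (∑ k' ∈ Finset.range (N + 1), a k' l' * x ^ k') * y ^ l'
          = ∑ l' ∈ Finset.range (N + 1), ∑ k' ∈ Finset.range (N + 1),
            a k' l' * x ^ k' * y ^ l' :=
            Finset.sum_congr rfl fun _ _ => Finset.sum_mul _ _ _
        _ = ∑ k' ∈ Finset.range (N + 1), ∑ l' ∈ Finset.range (N + 1),
            (x ^ k' * y ^ l') * a k' l' := by
            rw [Finset.sum_comm]
            exact Finset.sum_congr rfl fun _ _ =>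
              Finset.sum_congr rfl fun _ _ => by ring
    rw [e]
    exact h x y
  exact coeff_eq_zero_of_eval_zero (fun k' => a k' l) (fun x => h1 x l hl) k hk

lemma exists_perp {n : ℕ} (S : Submodule ℝ (Fin n → ℝ)) (hS : S ≠ ⊤) :
    ∃ α : Fin n → ℝ, α ≠ 0 ∧ ∀ w ∈ S, dotProduct α w = 0 := by
  obtain ⟨f, hf0, hfb⟩ :=
    S.exists_dual_map_eq_bot_of_lt_top (lt_top_iff_ne_top.mpr hS) inferInstance
  have key : ∀ w : Fin n → ℝ,
      f w = dotProduct (fun i => f fun j => if i = j then 1 else 0) w := by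
    intro w
    conv_lhs => rw [pi_eq_sum_univ w]
    rw [map_sum]
    simp [dotProduct, mul_comm]
  refine ⟨fun i => f fun j => if i = j then 1 else 0, ?_, ?_⟩
  · intro h0
    apply hf0
    apply LinearMap.ext
    intro w
    rw [key w, h0]
    simp
  · intro w hw
    rw [← key w]
    have : f w ∈ Submodule.map f S := Submodule.mem_map_of_mem hw
    rwa [hfb, Submodule.mem_bot] at this

lemma real_control {n p : ℕ} (A : Matrix (Fin n) (Fin n) ℝ) (B : Matrix (Fin n) (Fin p) ℝ)
    (x : ℝ) (v : Fin n → ℝ) (h : coeVec v ∈ Vsp A B (x : ℂ)) :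
    ∃ u : Fin p → ℝ, B *ᵥ u = x • v - A *ᵥ v := by
  obtain ⟨w, hw⟩ := h
  simp only [Matrix.mulVecLin_apply] at hw
  have key : ((x : ℂ) • (1 : Matrix (Fin n) (Fin n) ℂ) - mapC A) *ᵥ coeVec v
      = coeVec (x • v - A *ᵥ v) := by
    rw [Matrix.sub_mulVec, Matrix.smul_mulVec, Matrix.one_mulVec, mapC_mulVec,
      ← coeVec_smul]
    funext a
    simp [coeVec]
  rw [key] at hw
  refine ⟨fun a => (w a).re, ?_⟩
  funext i
  have h2 := congrArg (fun t : Fin n → ℂ => (t i).re) hw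
  simp only [Matrix.mulVec, dotProduct, mapC, Matrix.map_apply, coeVec,
    Complex.re_sum, Complex.mul_re, Complex.ofReal_re, Complex.ofReal_im, zero_mul,
    sub_zero] at h2
  simpa [Matrix.mulVec, dotProduct] using h2
/-- Entrywise evaluation of a matrix of real polynomials in two variables at a point of `ℂ²`. -/
def evalPC {n r : ℕ} (P : Matrix (Fin n) (Fin r) (MvPolynomial (Fin 2) ℝ)) (lam mu : ℂ) :
    Matrix (Fin n) (Fin r) ℂ :=
  P.map (MvPolynomial.aeval ![lam, mu])

/-- Let `Ω ⊆ (ℂ ∖ σ(A₁)) × (ℂ ∖ σ(A₂))` with `Ω ∩ (ℝ × ℝ)` dense in `ℝ × ℝ`, and let the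
columns of the polynomial matrix `P` span `V_{A₁,B₁}(λ) ∩ V_{A₂,B₂}(μ)` on `Ω`, with real
coefficient matrices `C_{kl}`. Then the pairs are feedback rectifiable over `Ω` iff no
nonzero real `α` annihilates all the coefficient matrices. -/
theorem feedback_rectifiable_iff_coeff_kernel
    {n p r N : ℕ} (A₁ A₂ : Matrix (Fin n) (Fin n) ℝ) (B₁ B₂ : Matrix (Fin n) (Fin p) ℝ)
    (Ω : Set (ℂ × ℂ))
    (hΩsub : ∀ d ∈ Ω, d.1 ∉ spectrum ℂ (mapC A₁) ∧ d.2 ∉ spectrum ℂ (mapC A₂))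
    (hΩdense : Dense {x : ℝ × ℝ | ((x.1 : ℂ), (x.2 : ℂ)) ∈ Ω})
    (P : Matrix (Fin n) (Fin r) (MvPolynomial (Fin 2) ℝ))
    (hP : ∀ d ∈ Ω, LinearMap.range (evalPC P d.1 d.2).mulVecLin =
      Vsp A₁ B₁ d.1 ⊓ Vsp A₂ B₂ d.2)
    (C : ℕ → ℕ → Matrix (Fin n) (Fin r) ℝ)
    (hC : ∀ lam mu : ℂ, evalPC P lam mu =
      ∑ k ∈ Finset.range (N + 1), ∑ l ∈ Finset.range (N + 1),
        (lam ^ k * mu ^ l) • mapC (C k l)) :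
    FeedbackRectifiable A₁ A₂ B₁ B₂ Ω ↔
    (∀ α : Fin n → ℝ, (∀ k l, k ≤ N → l ≤ N → Matrix.vecMul α (C k l) = 0) → α = 0) := by
  constructor
  · rintro ⟨F₁, F₂, lm, v, hmemΩ, hli, h1, h2⟩ α hα
    set αC : Fin n → ℂ := fun i => (α i : ℂ) with hαC
    have hvm : ∀ lam mu : ℂ, Matrix.vecMul αC (evalPC P lam mu) = 0 := by
      intro lam mu
      rw [hC lam mu]
      rw [vecMul_sumF]
      refine Finset.sum_eq_zero fun k hk => ?_
      rw [vecMul_sumF]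
      refine Finset.sum_eq_zero fun l hl => ?_
      rw [vecMul_smulF, show Matrix.vecMul αC (mapC (C k l)) =
        coeVec (Matrix.vecMul α (C k l)) from vecMul_coe_mapC α (C k l),
        hα k l (Nat.lt_succ_iff.mp (Finset.mem_range.mp hk))
          (Nat.lt_succ_iff.mp (Finset.mem_range.mp hl))]
      funext j
      simp [coeVec]
    have hdot : ∀ i, dotProduct αC (v i) = 0 := by
      intro i
      have hv1 : v i ∈ Vsp A₁ B₁ (lm i).1 := by
        rw [Vsp, Submodule.mem_comap]
        refine ⟨(mapC F₁).mulVec (v i), ?_⟩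
        simp only [Matrix.mulVecLin_apply]
        rw [Matrix.sub_mulVec, Matrix.smul_mulVec, Matrix.one_mulVec]
        have h := h1 i
        rw [mapC_add, Matrix.add_mulVec, mapC_mul, ← Matrix.mulVec_mulVec] at h
        exact eq_sub_of_add_eq' h
      have hv2 : v i ∈ Vsp A₂ B₂ (lm i).2 := by
        rw [Vsp, Submodule.mem_comap]
        refine ⟨(mapC F₂).mulVec (v i), ?_⟩
        simp only [Matrix.mulVecLin_apply]
        rw [Matrix.sub_mulVec, Matrix.smul_mulVec, Matrix.one_mulVec]
        have h := h2 i
        rw [mapC_add, Matrix.add_mulVec, mapC_mul, ← Matrix.mulVec_mulVec] at h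
        exact eq_sub_of_add_eq' h
      have hv : v i ∈ LinearMap.range (evalPC P (lm i).1 (lm i).2).mulVecLin := by
        rw [hP (lm i) (hmemΩ i)]
        exact ⟨hv1, hv2⟩
      obtain ⟨w, hw⟩ := hv
      rw [← hw, Matrix.mulVecLin_apply, Matrix.dotProduct_mulVec, hvm,
        zero_dotProduct]
    by_cases hn : n = 0
    · subst hn
      funext i
      exact i.elim0
    have : Nonempty (Fin n) := ⟨⟨0, Nat.pos_of_ne_zero hn⟩⟩
    have hsp : Submodule.span ℂ (Set.range v) = ⊤ :=
      hli.span_eq_top_of_card_eq_finrank (by simp)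
    let f : (Fin n → ℂ) →ₗ[ℂ] ℂ :=
      { toFun := fun w => dotProduct αC w
        map_add' := by
          intro x y
          simp [dotProduct, mul_add, Finset.sum_add_distrib]
        map_smul' := by
          intro c x
          simp [dotProduct, Finset.mul_sum, mul_left_comm] }
    have hf : f = 0 := by
      apply LinearMap.ext_on hsp
      rintro x ⟨i, rfl⟩
      exact hdot i
    funext i0
    have h0 : αC i0 = 0 := by
      have := congrArg (fun g : (Fin n → ℂ) →ₗ[ℂ] ℂ => g (Pi.single i0 1)) hf
      simpa [f, dotProduct, Pi.single_apply, Finset.sum_ite_eq] using this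
    have : (α i0 : ℂ) = 0 := h0
    exact_mod_cast this
  · intro hker
    classical
    set S : Set (ℝ × ℝ) := {x : ℝ × ℝ | ((x.1 : ℂ), (x.2 : ℂ)) ∈ Ω} with hSdef
    set Q : ℝ → ℝ → Matrix (Fin n) (Fin r) ℝ := fun x y =>
      ∑ k ∈ Finset.range (N + 1), ∑ l ∈ Finset.range (N + 1),
        (x ^ k * y ^ l) • C k l with hQdef
    have hQC : ∀ x y : ℝ, mapC (Q x y) = evalPC P (x : ℂ) (y : ℂ) := by
      intro x y
      rw [hC]
      ext i j
      simp only [hQdef, mapC, Matrix.map_apply, Matrix.sum_apply, Matrix.smul_apply,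
        smul_eq_mul]
      push_cast
      rfl
    set T : Set (Fin n → ℝ) :=
      {w | ∃ z : ℝ × ℝ, z ∈ S ∧ ∃ jc : Fin r, w = fun i => Q z.1 z.2 i jc} with hTdef
    -- the columns span everything
    have hTtop : Submodule.span ℝ T = ⊤ := by
      by_contra hne
      obtain ⟨α, hα0, hαperp⟩ := exists_perp _ hne
      have hpoly : ∀ x y : ℝ, ∀ jc : Fin r, Matrix.vecMul α (Q x y) jc
          = ∑ k ∈ Finset.range (N + 1), ∑ l ∈ Finset.range (N + 1),
            (x ^ k * y ^ l) * Matrix.vecMul α (C k l) jc := by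
        intro x y jc
        rw [hQdef]
        rw [vecMul_sumF]
        rw [Finset.sum_apply]
        refine Finset.sum_congr rfl fun k _ => ?_
        rw [vecMul_sumF, Finset.sum_apply]
        refine Finset.sum_congr rfl fun l _ => ?_
        rw [vecMul_smulF]
        simp
      have hcolzero : ∀ z ∈ S, ∀ jc : Fin r, Matrix.vecMul α (Q z.1 z.2) jc = 0 := by
        intro z hz jc
        have hm : (fun i => Q z.1 z.2 i jc) ∈ T := ⟨z, hz, jc, rfl⟩
        have := hαperp _ (Submodule.subset_span hm)
        simpa [Matrix.vecMul, dotProduct] using this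
      have hzero : ∀ x y : ℝ, ∀ jc : Fin r, Matrix.vecMul α (Q x y) jc = 0 := by
        intro x y jc
        have hcont : Continuous fun w : ℝ × ℝ =>
            ∑ k ∈ Finset.range (N + 1), ∑ l ∈ Finset.range (N + 1),
              (w.1 ^ k * w.2 ^ l) * Matrix.vecMul α (C k l) jc := by
          apply continuous_finset_sum
          intro k _
          apply continuous_finset_sum
          intro l _
          fun_prop
        have hEq : (fun w : ℝ × ℝ =>
            ∑ k ∈ Finset.range (N + 1), ∑ l ∈ Finset.range (N + 1),
              (w.1 ^ k * w.2 ^ l) * Matrix.vecMul α (C k l) jc) = fun _ => (0 : ℝ) := by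
          apply Continuous.ext_on hΩdense hcont continuous_const
          intro z hz
          have := hcolzero z hz jc
          rw [hpoly z.1 z.2 jc] at this
          exact this
        have := congrFun hEq (x, y)
        rw [hpoly x y jc]
        simpa using this
      have hcoeff : ∀ k l, k ≤ N → l ≤ N → Matrix.vecMul α (C k l) = 0 := by
        intro k l hk hl
        funext jc
        have := coeff2_eq_zero_of_eval_zero (fun k l => Matrix.vecMul α (C k l) jc)
          (fun x y => by rw [← hpoly x y jc]; exact hzero x y jc) k l hk hl
        simpa using this
      exact hα0 (hker α hcoeff)
    -- extract a basis from the columns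
    obtain ⟨b, hbT, hbspan, hbli⟩ := exists_linearIndependent ℝ T
    rw [hTtop] at hbspan
    have hbfin : b.Finite := hbli.setFinite
    haveI : Fintype b := hbfin.fintype
    let Bb : Module.Basis b ℝ (Fin n → ℝ) := Module.Basis.mk hbli (by rw [Subtype.range_coe, hbspan])
    have hcard : Fintype.card b = n := by
      have := Module.finrank_eq_card_basis Bb
      simpa using this.symm
    let e : Fin n ≃ b := (Fintype.equivFinOfCardEq hcard).symm
    let vR : Fin n → Fin n → ℝ := fun i => (e i : Fin n → ℝ)
    have hliR : LinearIndependent ℝ vR := hbli.comp e e.injective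
    have hdata : ∀ i, ∃ z : ℝ × ℝ, z ∈ S ∧ ∃ jc : Fin r,
        vR i = fun a => Q z.1 z.2 a jc := fun i => hbT (e i).2
    choose zz hzS jj hcol using hdata
    -- columns lie in the intersection subspace
    have hmemV : ∀ i, coeVec (vR i) ∈
        Vsp A₁ B₁ (((zz i).1 : ℝ) : ℂ) ⊓ Vsp A₂ B₂ (((zz i).2 : ℝ) : ℂ) := by
      intro i
      have hΩi : ((((zz i).1 : ℝ) : ℂ), (((zz i).2 : ℝ) : ℂ)) ∈ Ω := hzS i
      rw [← hP _ hΩi]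
      refine ⟨Pi.single (jj i) 1, ?_⟩
      rw [Matrix.mulVecLin_apply]
      show (evalPC P ((zz i).1 : ℂ) ((zz i).2 : ℂ)) *ᵥ Pi.single (jj i) 1 = coeVec (vR i)
      rw [← hQC, hcol i]
      funext a
      simp [Matrix.mulVec, dotProduct, Pi.single_apply, mapC, coeVec,
        Finset.sum_ite_eq]
    -- control inputs
    have hu1 : ∀ i, ∃ u : Fin p → ℝ,
        B₁ *ᵥ u = (zz i).1 • vR i - A₁ *ᵥ vR i :=
      fun i => real_control A₁ B₁ (zz i).1 (vR i) (hmemV i).1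
    have hu2 : ∀ i, ∃ u : Fin p → ℝ,
        B₂ *ᵥ u = (zz i).2 • vR i - A₂ *ᵥ vR i :=
      fun i => real_control A₂ B₂ (zz i).2 (vR i) (hmemV i).2
    choose u1 hu1 using hu1
    choose u2 hu2 using hu2
    -- the eigenvector matrix
    set V : Matrix (Fin n) (Fin n) ℝ := Matrix.of fun a i => vR i a with hVdef
    have hVt : IsUnit Vᵀ := by
      rw [← Matrix.linearIndependent_rows_iff_isUnit]
      exact hliR
    have hVunit : IsUnit V := by rwa [Matrix.isUnit_transpose] at hVt
    have hVdet : IsUnit V.det := (Matrix.isUnit_iff_isUnit_det V).mp hVunit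
    have hVinv : V⁻¹ * V = 1 := Matrix.nonsing_inv_mul V hVdet
    have hVcol : ∀ i, V *ᵥ Pi.single i 1 = vR i := by
      intro i
      funext a
      simp [hVdef, Matrix.mulVec, dotProduct, Pi.single_apply, Finset.sum_ite_eq]
    -- the feedbacks
    set U1 : Matrix (Fin p) (Fin n) ℝ := Matrix.of fun a i => u1 i a with hU1def
    set U2 : Matrix (Fin p) (Fin n) ℝ := Matrix.of fun a i => u2 i a with hU2def
    have hF : ∀ (U : Matrix (Fin p) (Fin n) ℝ) (i), (U * V⁻¹) *ᵥ vR i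
        = fun a => U a i := by
      intro U i
      rw [← hVcol i, Matrix.mulVec_mulVec, Matrix.mul_assoc, hVinv, Matrix.mul_one]
      funext a
      simp [Matrix.mulVec, dotProduct, Pi.single_apply, Finset.sum_ite_eq]
    have hAcl1 : ∀ i, (A₁ + B₁ * (U1 * V⁻¹)) *ᵥ vR i = (zz i).1 • vR i := by
      intro i
      rw [Matrix.add_mulVec, ← Matrix.mulVec_mulVec, hF U1 i]
      have : (fun a => U1 a i) = u1 i := by funext a; simp [hU1def]
      rw [this, hu1 i]
      abel
    have hAcl2 : ∀ i, (A₂ + B₂ * (U2 * V⁻¹)) *ᵥ vR i = (zz i).2 • vR i := by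
      intro i
      rw [Matrix.add_mulVec, ← Matrix.mulVec_mulVec, hF U2 i]
      have : (fun a => U2 a i) = u2 i := by funext a; simp [hU2def]
      rw [this, hu2 i]
      abel
    -- assemble
    refine ⟨U1 * V⁻¹, U2 * V⁻¹, fun i => ((((zz i).1 : ℝ) : ℂ), (((zz i).2 : ℝ) : ℂ)),
      fun i => coeVec (vR i), fun i => hzS i, ?_, ?_, ?_⟩
    · -- complex linear independence
      have hdetC : (mapC V).det = ((V.det : ℝ) : ℂ) := by
        have := RingHom.map_det Complex.ofRealHom V
        exact this.symm
      have hMC : IsUnit (mapC V) := by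
        rw [Matrix.isUnit_iff_isUnit_det, hdetC, isUnit_iff_ne_zero]
        simpa [Complex.ofReal_ne_zero] using hVdet.ne_zero
      have hMCt : IsUnit (mapC V)ᵀ := by rwa [Matrix.isUnit_transpose]
      have := Matrix.linearIndependent_rows_iff_isUnit.mpr hMCt
      exact this
    · intro i
      show (mapC (A₁ + B₁ * (U1 * V⁻¹))) *ᵥ coeVec (vR i) = _
      rw [mapC_mulVec, hAcl1 i, coeVec_smul]
    · intro i
      show (mapC (A₂ + B₂ * (U2 * V⁻¹))) *ᵥ coeVec (vR i) = _
      rw [mapC_mulVec, hAcl2 i, coeVec_smul]
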